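/- arXiv:2406.15902 — 7 statements merged into one kernel-verified Lean document; each statement's English description precedes it below -/
import Mathlib

section
/- The non-commuting graph of a finite non-abelian Lie algebra is connected, with diameter at most 2: for any two non-adjacent vertices x, y there exists a vertex z adjacent to both. -/
/-- The center of a Lie ring, as a set. -/
def lieCenter (L : Type*) [LieRing L] : Set L := {z : L | ∀ y : L, ⁅z, y⁆ = 0}

lemma mem_compl_of_lie_ne {L : Type*} [LieRing L] {x z : L} (h : ⁅x, z⁆ ≠ 0) :
    z ∈ (lieCenter L)ᶜ := by
  intro hz
  exact h (by rw [← lie_skew, hz, neg_zero])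

/-- The non-commuting graph of a finite non-abelian Lie algebra is connected
with diameter at most 2: any two distinct non-adjacent vertices have a common
neighbour. -/
theorem stmt_2 (K L : Type*) [Field K] [Fintype K] [LieRing L] [LieAlgebra K L]
    [Fintype L] (hna : ∃ a b : L, ⁅a, b⁆ ≠ 0) :
    ∀ x ∈ (lieCenter L)ᶜ, ∀ y ∈ (lieCenter L)ᶜ, x ≠ y → ⁅x, y⁆ = 0 →
      ∃ z ∈ (lieCenter L)ᶜ, z ≠ x ∧ z ≠ y ∧ ⁅x, z⁆ ≠ 0 ∧ ⁅y, z⁆ ≠ 0 := by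
  intro x hx y hy hxy hc
  have hx' : ¬ ∀ a : L, ⁅x, a⁆ = 0 := hx
  have hy' : ¬ ∀ b : L, ⁅y, b⁆ = 0 := hy
  push_neg at hx' hy'
  obtain ⟨a, ha⟩ := hx'
  obtain ⟨b, hb⟩ := hy'
  by_cases hya : ⁅y, a⁆ = 0
  · by_cases hxb : ⁅x, b⁆ = 0
    · have hxz : ⁅x, a + b⁆ ≠ 0 := by simpa [hxb] using ha
      have hyz : ⁅y, a + b⁆ ≠ 0 := by simpa [hya] using hb
      refine ⟨a + b, mem_compl_of_lie_ne hxz, ?_, ?_, hxz, hyz⟩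
      · intro h; exact hxz (by rw [h]; exact lie_self x)
      · intro h; exact hyz (by rw [h]; exact lie_self y)
    · refine ⟨b, mem_compl_of_lie_ne hxb, ?_, ?_, hxb, hb⟩
      · intro h; exact hxb (by rw [h]; exact lie_self x)
      · intro h; exact hb (by rw [h]; exact lie_self y)
  · refine ⟨a, mem_compl_of_lie_ne ha, ?_, ?_, ha, hya⟩
    · intro h; exact ha (by rw [h]; exact lie_self x)
    · intro h; exact hya (by rw [h]; exact lie_self y)
end

section
/- If the non-commuting graph of a finite non-abelian Lie algebra L over F_q is complete (every two distinct non-central elements fail to commute), then Z(L) = 0 and q = 2. -/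
/-- If the non-commuting graph of a finite non-abelian Lie algebra `L` over `F_q`
is complete (any two distinct non-central elements fail to commute), then
`Z(L) = 0` and `q = 2`. -/
theorem stmt_4 (K L : Type*) [Field K] [Fintype K] [LieRing L] [LieAlgebra K L]
    [Fintype L] (hna : ∃ a b : L, ⁅a, b⁆ ≠ 0)
    (hcomplete : ∀ x ∈ (lieCenter L)ᶜ, ∀ y ∈ (lieCenter L)ᶜ, x ≠ y → ⁅x, y⁆ ≠ 0) :
    lieCenter L = {0} ∧ Fintype.card K = 2 := by
  obtain ⟨a, b, hab⟩ := hna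
  have ha : a ∈ (lieCenter L)ᶜ := fun h => hab (h b)
  have ha0 : a ≠ 0 := by
    intro h
    exact hab (by rw [h, zero_lie])
  constructor
  · ext z
    simp only [Set.mem_singleton_iff]
    constructor
    · intro hz
      by_contra hz0
      have haz : a + z ∈ (lieCenter L)ᶜ := by
        intro h
        have := h b
        rw [add_lie, hz b, add_zero] at this
        exact hab this
      have hne : a ≠ a + z := by
        intro h
        exact hz0 (by have := congrArg (· - a) h; simpa using this.symm)
      refine hcomplete a ha (a + z) haz hne ?_
      have hza : ⁅a, z⁆ = 0 := by
        rw [← lie_skew, hz a, neg_zero]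
      rw [lie_add, lie_self, hza, add_zero]
    · intro h
      subst h
      intro y
      exact zero_lie y
  · classical
    have hall : ∀ c : K, c = 0 ∨ c = 1 := by
      intro c
      by_contra hc
      push_neg at hc
      obtain ⟨hc0, hc1⟩ := hc
      have hca : c • a ∈ (lieCenter L)ᶜ := by
        intro h
        have := h b
        rw [smul_lie] at this
        exact hab (by simpa [hc0] using (smul_eq_zero.mp this).resolve_left hc0)
      have hne : a ≠ c • a := by
        intro h
        have : (1 - c) • a = 0 := by
          rw [sub_smul, one_smul, ← h, sub_self]
        rcases smul_eq_zero.mp this with h1 | h1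
        · exact hc1 (sub_eq_zero.mp h1).symm
        · exact ha0 h1
      refine hcomplete a ha (c • a) hca hne ?_
      rw [lie_smul, lie_self, smul_zero]
    have h01 : (Finset.univ : Finset K) = ({0, 1} : Finset K) := by
      ext c
      simpa using hall c
    rw [← Finset.card_univ, h01]
    simp
end

section
/- Every vertex x of the non-commuting graph of a finite non-abelian Lie algebra satisfies deg(x) > |V|/2, where V is the vertex set; hence (by Dirac's theorem) the graph is Hamiltonian. -/
/-- The non-commuting graph of a Lie ring `L`: vertices are the non-central
elements (those with `⁅x,y⁆ ≠ 0` for some `y`), and two vertices are adjacent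
iff their bracket is nonzero. -/
def ncGraph (L : Type*) [LieRing L] :
    SimpleGraph {x : L // ∃ y : L, ⁅x, y⁆ ≠ 0} where
  Adj a b := ⁅(a : L), (b : L)⁆ ≠ 0
  symm := by
    constructor
    intro a b h hba
    exact h (by rw [← lie_skew, hba, neg_zero])
  loopless := by
    constructor
    intro a h
    exact h (lie_self _)


section DiracAux

open List


open List

variable {α : Type*} [Fintype α] [DecidableEq α] {G : SimpleGraph α} [DecidableRel G.Adj]

lemma common_nbr (hdeg : ∀ v, Fintype.card α < 2 * (G.neighborFinset v).card) (u v : α) :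
    ∃ w, G.Adj u w ∧ G.Adj v w := by
  have h := Finset.card_union_add_card_inter (G.neighborFinset u) (G.neighborFinset v)
  have h2 : (G.neighborFinset u ∪ G.neighborFinset v).card ≤ Fintype.card α :=
    Finset.card_le_univ _
  have hu := hdeg u; have hv := hdeg v
  have hpos : 0 < (G.neighborFinset u ∩ G.neighborFinset v).card := by omega
  obtain ⟨w, hw⟩ := Finset.card_pos.mp hpos
  rw [Finset.mem_inter, SimpleGraph.mem_neighborFinset, SimpleGraph.mem_neighborFinset] at hw
  exact ⟨w, hw⟩

omit [DecidableEq α] [DecidableRel G.Adj] in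
lemma exists_max_path [Nonempty α] :
    ∃ l : List α, l.IsChain G.Adj ∧ l.Nodup ∧ l ≠ [] ∧
      ∀ l' : List α, l'.IsChain G.Adj → l'.Nodup → l'.length ≤ l.length := by
  classical
  set P : ℕ → Prop := fun k => ∃ l : List α, l.IsChain G.Adj ∧ l.Nodup ∧ l ≠ [] ∧ l.length = k
    with hP
  have h1 : P 1 := ⟨[Classical.arbitrary α], by simp, by simp, by simp, rfl⟩
  have hcard : 1 ≤ Fintype.card α := Fintype.card_pos
  obtain ⟨l, hc, hn, hne, hlen⟩ := Nat.findGreatest_spec (n := Fintype.card α) hcard h1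
  refine ⟨l, hc, hn, hne, ?_⟩
  intro l' hc' hn'
  rcases eq_or_ne l' [] with rfl | hne'
  · simp
  · have hP' : P l'.length := ⟨l', hc', hn', hne', rfl⟩
    have := Nat.le_findGreatest (hn'.length_le_card) hP'
    omega

set_option maxHeartbeats 1000000 in
lemma exists_ham_cycle_list [Nonempty α]
    (hdeg : ∀ v, Fintype.card α < 2 * (G.neighborFinset v).card) :
    ∃ c : List α, c.IsChain G.Adj ∧ c.Nodup ∧ (∀ x, x ∈ c) ∧
      (∀ a ∈ c.getLast?, ∀ b ∈ c.head?, G.Adj a b) := by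
  obtain ⟨l, hc, hn, hne, hmax⟩ := exists_max_path (G := G)
  set v0 : α := l.head hne with hv0
  set vk : α := l.getLast hne with hvk
  have hhead? : l.head? = some v0 := List.head?_eq_head hne
  have hlast? : l.getLast? = some vk := List.getLast?_eq_getLast hne
  -- all neighbors of v0 are in l
  have hnb0 : ∀ u, G.Adj v0 u → u ∈ l := by
    intro u hu
    by_contra h
    have hc' : (u :: l).IsChain G.Adj := by
      rw [List.isChain_cons]
      refine ⟨?_, hc⟩
      intro y hy
      rw [hhead?, Option.mem_some_iff] at hy
      subst hy
      exact hu.symm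
    have hn' : (u :: l).Nodup := List.nodup_cons.mpr ⟨h, hn⟩
    have := hmax _ hc' hn'
    simp at this
  -- all neighbors of vk are in l
  have hnbk : ∀ u, G.Adj vk u → u ∈ l := by
    intro u hu
    by_contra h
    have hc' : (l ++ [u]).IsChain G.Adj := by
      rw [List.isChain_append]
      refine ⟨hc, List.isChain_singleton u, ?_⟩
      intro x hx y hy
      rw [hlast?, Option.mem_some_iff] at hx
      simp only [List.head?_cons, Option.mem_some_iff] at hy
      subst hx; subst hy
      exact hu
    have hn' : (l ++ [u]).Nodup := by
      simp [List.nodup_append, hn, h]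
      exact fun a ha hau => h (hau ▸ ha)
    have := hmax _ hc' hn'
    simp at this
  -- k
  set k : ℕ := l.length - 1 with hk
  have hlen1 : 1 ≤ l.length := List.length_pos_iff.mpr hne
  have hlenk : l.length = k + 1 := by omega
  -- index sets
  set A : Finset ℕ := (G.neighborFinset v0).image (fun u => l.idxOf u - 1) with hA
  set B : Finset ℕ := (G.neighborFinset vk).image (fun u => l.idxOf u) with hB
  have hhd0 : l[(0:ℕ)]? = some v0 := by
    rw [← List.head?_eq_getElem?]
    exact hhead?
  have hlastk : l[k]? = some vk := by
    rw [show (k:ℕ) = l.length - 1 by omega, ← List.getLast?_eq_getElem?]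
    exact hlast?
  have hidx0 : ∀ u, G.Adj v0 u → 1 ≤ l.idxOf u ∧ l.idxOf u < l.length := by
    intro u hu
    have hmem := hnb0 u hu
    have hlt : l.idxOf u < l.length := List.idxOf_lt_length_iff.mpr hmem
    refine ⟨?_, hlt⟩
    by_contra h
    have h0 : l.idxOf u = 0 := by omega
    have h1 : l[(0:ℕ)]? = some u := by rw [← h0]; exact List.getElem?_idxOf hmem
    rw [hhd0] at h1
    exact hu.ne (Option.some_injective _ h1)
  have hidxk : ∀ u, G.Adj vk u → l.idxOf u < k := by
    intro u hu
    have hmem := hnbk u hu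
    have hlt : l.idxOf u < l.length := List.idxOf_lt_length_iff.mpr hmem
    have hne2 : l.idxOf u ≠ k := by
      intro h
      have h1 : l[k]? = some u := by rw [← h]; exact List.getElem?_idxOf hmem
      rw [hlastk] at h1
      exact hu.ne (Option.some_injective _ h1)
    omega
  have hAsub : A ⊆ Finset.range k := by
    intro i hi
    rw [hA, Finset.mem_image] at hi
    obtain ⟨u, hu, rfl⟩ := hi
    rw [SimpleGraph.mem_neighborFinset] at hu
    have := hidx0 u hu
    rw [Finset.mem_range]
    omega
  have hBsub : B ⊆ Finset.range k := by
    intro i hi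
    rw [hB, Finset.mem_image] at hi
    obtain ⟨u, hu, rfl⟩ := hi
    rw [SimpleGraph.mem_neighborFinset] at hu
    rw [Finset.mem_range]
    exact hidxk u hu
  have hAcard : A.card = (G.neighborFinset v0).card := by
    rw [hA]
    apply Finset.card_image_of_injOn
    intro x hx y hy hxy
    simp only [Finset.mem_coe, SimpleGraph.mem_neighborFinset] at hx hy
    have hx1 := hidx0 x hx
    have hy1 := hidx0 y hy
    simp only at hxy
    have hidx : l.idxOf x = l.idxOf y := by omega
    have e1 : l[l.idxOf y]? = some x := by rw [← hidx]; exact List.getElem?_idxOf (hnb0 x hx)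
    have e2 := List.getElem?_idxOf (hnb0 y hy)
    rw [e1] at e2
    exact Option.some_injective _ e2
  have hBcard : B.card = (G.neighborFinset vk).card := by
    rw [hB]
    apply Finset.card_image_of_injOn
    intro x hx y hy hxy
    simp only [Finset.mem_coe, SimpleGraph.mem_neighborFinset] at hx hy
    simp only at hxy
    have e1 : l[l.idxOf y]? = some x := by rw [← hxy]; exact List.getElem?_idxOf (hnbk x hx)
    have e2 := List.getElem?_idxOf (hnbk y hy)
    rw [e1] at e2
    exact Option.some_injective _ e2
  -- intersection nonempty
  have hABinter : (A ∩ B).Nonempty := by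
    rw [← Finset.card_pos]
    have h1 := Finset.card_union_add_card_inter A B
    have h2 : (A ∪ B).card ≤ k := by
      have := Finset.card_le_card (Finset.union_subset hAsub hBsub)
      simpa using this
    have h3 := hdeg v0
    have h4 := hdeg vk
    have h5 : l.length ≤ Fintype.card α := hn.length_le_card
    omega
  obtain ⟨i, hi⟩ := hABinter
  rw [Finset.mem_inter, hA, hB, Finset.mem_image, Finset.mem_image] at hi
  obtain ⟨⟨u1, hu1, hu1i⟩, ⟨u2, hu2, hu2i⟩⟩ := hi
  rw [SimpleGraph.mem_neighborFinset] at hu1 hu2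
  have hiu1 := hidx0 u1 hu1
  have hiu2lt : l.idxOf u2 < l.length := List.idxOf_lt_length_iff.mpr (hnbk u2 hu2)
  have hik : i < k := by have := hidxk u2 hu2; omega
  have hi1lt : i + 1 < l.length := by omega
  have hilt : i < l.length := by omega
  have hgl1 : l[i + 1]? = some u1 := by
    rw [show i + 1 = l.idxOf u1 by omega]
    exact List.getElem?_idxOf (hnb0 u1 hu1)
  have hgl2 : l[i]? = some u2 := by
    rw [show i = l.idxOf u2 by omega]
    exact List.getElem?_idxOf (hnbk u2 hu2)
  -- build cycle
  set t : List α := l.take (i + 1) with ht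
  set d : List α := l.drop (i + 1) with hd
  have htd : t ++ d = l := List.take_append_drop _ _
  have htne : t ≠ [] := by
    rw [ht, ← List.length_pos_iff, List.length_take]
    omega
  have hdne : d ≠ [] := by
    rw [hd, ← List.length_pos_iff, List.length_drop]
    omega
  have htlast? : t.getLast? = some u2 := by
    rw [ht, List.getLast?_eq_getElem?, List.length_take,
      show min (i + 1) l.length - 1 = i by omega, List.getElem?_take, if_pos (by omega)]
    exact hgl2
  have hdhead? : d.head? = some u1 := by
    rw [hd, List.head?_drop]
    exact hgl1
  have hdlast? : d.getLast? = some vk := by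
    have h := hlast?
    rw [← htd, List.getLast?_append] at h
    rcases hdl : d.getLast? with _ | x
    · rw [List.getLast?_eq_none_iff] at hdl; exact absurd hdl hdne
    · rw [hdl, Option.some_or] at h; rw [h]
  have hthead? : t.head? = some v0 := by
    have h := hhead?
    rw [← htd, List.head?_append] at h
    rcases htl : t.head? with _ | x
    · rw [List.head?_eq_none_iff] at htl; exact absurd htl htne
    · rw [htl, Option.some_or] at h; rw [h]
  set c : List α := t ++ d.reverse with hcdef
  have hperm : c.Perm l := by
    rw [hcdef, ← htd]
    exact List.Perm.append_left t d.reverse_perm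
  have hcchain : c.IsChain G.Adj := by
    rw [hcdef, List.isChain_append]
    refine ⟨hc.prefix (htd ▸ List.prefix_append t d), ?_, ?_⟩
    · rw [List.isChain_reverse]
      exact (hc.suffix (htd ▸ List.suffix_append t d)).imp (fun a b h => h.symm)
    · intro x hx y hy
      rw [htlast?, Option.mem_some_iff] at hx
      rw [List.head?_reverse, hdlast?, Option.mem_some_iff] at hy
      subst hx; subst hy
      exact hu2.symm
  have hcclose : ∀ a ∈ c.getLast?, ∀ b ∈ c.head?, G.Adj a b := by
    intro a ha b hb
    have hdr : d.reverse.getLast? = some u1 := by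
      rw [List.getLast?_reverse, hdhead?]
    rw [hcdef, List.getLast?_append, hdr, Option.some_or, Option.mem_some_iff] at ha
    rw [hcdef, List.head?_append, hthead?, Option.some_or, Option.mem_some_iff] at hb
    subst ha; subst hb
    exact hu1.symm
  have hcnodup : c.Nodup := hperm.nodup_iff.mpr hn
  have hcmem : ∀ x, x ∈ c ↔ x ∈ l := fun x => hperm.mem_iff
  have hclen : c.length = l.length := hperm.length_eq
  -- coverage
  have hall : ∀ x, x ∈ l := by
    by_contra h
    push_neg at h
    obtain ⟨w, hw⟩ := h
    by_cases hadj : ∃ u ∈ l, G.Adj w u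
    · obtain ⟨u, hu, hwu⟩ := hadj
      have huc : u ∈ c := (hcmem u).mpr hu
      obtain ⟨x, y, hxy⟩ := List.append_of_mem huc
      set c' : List α := (u :: y) ++ x with hc'def
      have hc'perm : c'.Perm c := by
        rw [hc'def, hxy]
        exact List.perm_append_comm
      have hc'chain : c'.IsChain G.Adj := by
        rw [hc'def, List.isChain_append]
        refine ⟨hcchain.suffix ⟨x, hxy.symm⟩, hcchain.prefix ⟨u :: y, hxy.symm⟩, ?_⟩
        intro p hp q hq
        rcases x with _ | ⟨x0, xs⟩
        · simp at hq
        · simp only [List.head?_cons, Option.mem_some_iff] at hq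
          subst hq
          apply hcclose
          · obtain ⟨z, hgl⟩ : ∃ z, (u :: y).getLast? = some z :=
              ⟨(u :: y).getLast (by simp), List.getLast?_eq_getLast (by simp)⟩
            rw [hxy, List.getLast?_append, hgl, Option.some_or]
            rw [hgl] at hp
            exact hp
          · rw [hxy]
            simp
      have hlonger : (w :: c').IsChain G.Adj := by
        rw [List.isChain_cons]
        refine ⟨?_, hc'chain⟩
        intro z hz
        rw [hc'def] at hz
        simp only [List.cons_append, List.head?_cons, Option.mem_some_iff] at hz
        subst hz
        exact hwu
      have hwnc : w ∉ c' := by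
        intro hmem
        exact hw ((hcmem w).mp (hc'perm.mem_iff.mp hmem))
      have hnodup' : (w :: c').Nodup :=
        List.nodup_cons.mpr ⟨hwnc, hc'perm.nodup_iff.mpr hcnodup⟩
      have := hmax _ hlonger hnodup'
      have hlen' : c'.length = l.length := by
        rw [hc'perm.length_eq, hclen]
      simp only [List.length_cons, hlen'] at this
      omega
    · push_neg at hadj
      obtain ⟨z, hwz, h0z⟩ := common_nbr hdeg w v0
      have hznl : z ∉ l := fun hz => hadj z hz hwz
      have hc' : (z :: l).IsChain G.Adj := by
        rw [List.isChain_cons]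
        refine ⟨?_, hc⟩
        intro y hy
        rw [hhead?, Option.mem_some_iff] at hy
        subst hy
        exact h0z.symm
      have hn' : (z :: l).Nodup := List.nodup_cons.mpr ⟨hznl, hn⟩
      have := hmax _ hc' hn'
      simp at this
  exact ⟨c, hcchain, hcnodup, fun x => (hcmem x).mpr (hall x), hcclose⟩

omit [Fintype α] [DecidableEq α] [DecidableRel G.Adj] in
lemma walk_of_chain : ∀ (l : List α) (a : α), List.IsChain G.Adj (a :: l) →
    ∃ p : G.Walk a ((a :: l).getLast (List.cons_ne_nil a l)), p.support = a :: l := by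
  intro l
  induction l with
  | nil => intro a _; exact ⟨SimpleGraph.Walk.nil, rfl⟩
  | cons x l ih =>
    intro a hch
    rw [List.isChain_cons_cons] at hch
    obtain ⟨q, hq⟩ := ih x hch.2
    have he : (x :: l).getLast (List.cons_ne_nil x l)
        = (a :: x :: l).getLast (List.cons_ne_nil a (x :: l)) :=
      (List.getLast_cons (List.cons_ne_nil x l)).symm
    refine ⟨(SimpleGraph.Walk.cons hch.1 q).copy rfl he, ?_⟩
    rw [SimpleGraph.Walk.support_copy, SimpleGraph.Walk.support_cons, hq]

omit [Fintype α] [DecidableEq α] [DecidableRel G.Adj] in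
lemma edge_end_len {w : α} : ∀ {u : α} (q : G.Walk u w),
    q.support.Nodup → s(w, u) ∈ q.edges → q.length = 1 := by
  intro u q
  induction q with
  | nil => intro _ he; simp at he
  | cons h r _ =>
    rename_i a b _
    intro hnd he
    rw [SimpleGraph.Walk.support_cons, List.nodup_cons] at hnd
    rw [SimpleGraph.Walk.edges_cons, List.mem_cons] at he
    rcases he with he | he
    · rw [Sym2.eq_iff] at he
      rcases he with ⟨h1, _⟩ | ⟨h1, _⟩
      · exact absurd (h1 ▸ SimpleGraph.Walk.end_mem_support r) hnd.1
      · subst h1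
        cases r with
        | nil => simp
        | cons h' r' =>
          rw [SimpleGraph.Walk.support_cons, List.nodup_cons] at hnd
          exact absurd (SimpleGraph.Walk.end_mem_support r') hnd.2.1
    · exact absurd (SimpleGraph.Walk.snd_mem_support_of_mem_edges r he) hnd.1

theorem dirac_ham' [Nonempty α]
    (hdeg : ∀ v, Fintype.card α < 2 * (G.neighborFinset v).card) : G.IsHamiltonian := by
  have hcard3 : 3 ≤ Fintype.card α := by
    obtain ⟨v⟩ := ‹Nonempty α›
    have h1 := hdeg v
    have h2 : G.neighborFinset v ⊆ Finset.univ.erase v := by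
      intro u hu
      rw [SimpleGraph.mem_neighborFinset] at hu
      exact Finset.mem_erase.mpr ⟨hu.ne', Finset.mem_univ u⟩
    have h3 := Finset.card_le_card h2
    rw [Finset.card_erase_of_mem (Finset.mem_univ v), Finset.card_univ] at h3
    omega
  obtain ⟨c, hch, hnd, hmem, hclose⟩ := exists_ham_cycle_list hdeg
  have hlen : c.length = Fintype.card α := by
    have h1 : c.toFinset = Finset.univ :=
      Finset.eq_univ_iff_forall.mpr (fun x => List.mem_toFinset.mpr (hmem x))
    have h2 := List.toFinset_card_of_nodup hnd
    rw [h1, Finset.card_univ] at h2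
    omega
  rcases c with _ | ⟨a, c1⟩
  · simp at hlen; omega
  rcases c1 with _ | ⟨v1, rest⟩
  · simp at hlen; omega
  have hrest : rest ≠ [] := by
    intro h
    subst h
    simp at hlen
    omega
  have hch2 : G.Adj a v1 ∧ List.IsChain G.Adj (v1 :: rest) := List.isChain_cons_cons.mp hch
  have hchain : List.IsChain G.Adj (v1 :: (rest ++ [a])) := by
    have hh : List.IsChain G.Adj ((v1 :: rest) ++ [a]) := by
      rw [List.isChain_append]
      refine ⟨hch2.2, List.isChain_singleton a, ?_⟩
      intro x hx y hy
      simp only [List.head?_cons, Option.mem_some_iff] at hy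
      subst hy
      apply hclose
      · rw [List.getLast?_cons_cons]
        exact hx
      · simp
    exact hh
  obtain ⟨p, hp⟩ := walk_of_chain (rest ++ [a]) v1 hchain
  have hlastend : ((v1 :: (rest ++ [a])).getLast (List.cons_ne_nil _ _)) = a := by
    have h1 : ((v1 :: rest) ++ [a]).getLast? = some a := List.getLast?_concat
    have h2 := List.getLast?_eq_getLast (l := (v1 :: rest) ++ [a]) (by simp)
    rw [h2] at h1
    exact Option.some_injective _ h1
  set q : G.Walk v1 a := p.copy rfl hlastend with hqdef
  have hqsupp : q.support = v1 :: (rest ++ [a]) := by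
    rw [hqdef, SimpleGraph.Walk.support_copy, hp]
  have hpermc : ((v1 :: rest) ++ [a]).Perm (a :: v1 :: rest) := by
    have := List.perm_append_comm (l₁ := v1 :: rest) (l₂ := [a])
    simpa using this
  have hqnd : q.support.Nodup := by
    rw [hqsupp, show v1 :: (rest ++ [a]) = (v1 :: rest) ++ [a] by simp]
    exact hpermc.nodup_iff.mpr hnd
  set pc : G.Walk a a := SimpleGraph.Walk.cons hch2.1 q with hpcdef
  intro _
  refine ⟨a, pc, ?_⟩
  rw [SimpleGraph.Walk.isHamiltonianCycle_isCycle_and_isHamiltonian_tail]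
  constructor
  · rw [hpcdef, SimpleGraph.Walk.cons_isCycle_iff]
    refine ⟨SimpleGraph.Walk.IsPath.mk' hqnd, ?_⟩
    intro hedge
    have hlen1 : q.length = 1 := edge_end_len q hqnd hedge
    have hsl := SimpleGraph.Walk.length_support q
    rw [hqsupp] at hsl
    simp only [List.length_cons, List.length_append, List.length_singleton] at hsl
    have : rest.length ≠ 0 := fun h => hrest (List.length_eq_zero_iff.mp h)
    omega
  · intro x
    have hnil : ¬pc.Nil := SimpleGraph.Walk.not_nil_cons
    rw [SimpleGraph.Walk.support_tail_of_not_nil pc hnil, hpcdef, SimpleGraph.Walk.support_cons,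
      List.tail_cons, hqsupp]
    have h1 : List.count x (a :: v1 :: rest) = 1 :=
      List.count_eq_one_of_mem hnd (hmem x)
    rw [show v1 :: (rest ++ [a]) = (v1 :: rest) ++ [a] by simp]
    rw [hpermc.count_eq]
    exact h1

theorem dirac_ham {β : Type*} [Fintype β] [DecidableEq β] [Nonempty β] (H : SimpleGraph β)
    (hdeg : ∀ v, Fintype.card β < 2 * (H.neighborSet v).ncard) : H.IsHamiltonian := by
  classical
  have hdeg' : ∀ v, Fintype.card β < 2 * (H.neighborFinset v).card := by
    intro v
    have h : (H.neighborSet v).ncard = (H.neighborFinset v).card := by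
      rw [← Set.ncard_coe_finset]
      congr 1
      ext x
      simp
    rw [← h]
    exact hdeg v
  exact dirac_ham' hdeg'

end DiracAux

theorem deg_bound (L : Type*) [LieRing L] [Fintype L]
    (v : {x : L // ∃ y : L, ⁅x, y⁆ ≠ 0}) :
    Nat.card {x : L // ∃ y : L, ⁅x, y⁆ ≠ 0} < 2 * ((ncGraph L).neighborSet v).ncard := by
  classical
  set Vs : Set L := {x : L | ∃ y : L, ⁅x, y⁆ ≠ 0} with hVs
  let C : AddSubgroup L :=
  { carrier := {x | ⁅(v : L), x⁆ = 0}
    add_mem' := by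
      intro a b ha hb
      simp only [Set.mem_setOf_eq] at *
      rw [lie_add, ha, hb, add_zero]
    zero_mem' := lie_zero _
    neg_mem' := by
      intro a ha
      simp only [Set.mem_setOf_eq] at *
      rw [lie_neg, ha, neg_zero] }
  have himg : (Subtype.val '' ((ncGraph L).neighborSet v)) = ((C : Set L))ᶜ := by
    ext x
    constructor
    · rintro ⟨b, hb, rfl⟩
      exact hb
    · intro hx
      refine ⟨⟨x, ⟨(v : L), ?_⟩⟩, hx, rfl⟩
      intro h
      exact hx (show ⁅(v : L), x⁆ = 0 by rw [← lie_skew, h, neg_zero])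
  have h1 : ((ncGraph L).neighborSet v).ncard = (((C : Set L))ᶜ).ncard := by
    rw [← himg, Set.ncard_image_of_injective _ Subtype.val_injective]
  have h2 : (C : Set L).ncard + (((C : Set L))ᶜ).ncard = Nat.card L :=
    Set.ncard_add_ncard_compl _
  have h3 : Nat.card {x : L // ∃ y : L, ⁅x, y⁆ ≠ 0} = Vs.ncard :=
    Nat.card_coe_set_eq Vs
  have h4 : Vs.ncard + Vsᶜ.ncard = Nat.card L := Set.ncard_add_ncard_compl _
  have hz : 1 ≤ Vsᶜ.ncard := by
    rw [Nat.one_le_iff_ne_zero, Ne, Set.ncard_eq_zero (Set.toFinite _),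
      ← Ne, ← Set.nonempty_iff_ne_empty]
    exact ⟨0, by simp [hVs]⟩
  have hCcard : (C : Set L).ncard = Nat.card C := (Nat.card_coe_set_eq _).symm
  have hdvd : Nat.card C ∣ Nat.card L := AddSubgroup.card_addSubgroup_dvd_card C
  have hne : Nat.card C ≠ Nat.card L := by
    intro h
    have : C = ⊤ := AddSubgroup.eq_top_of_card_eq C h
    obtain ⟨y, hy⟩ := v.2
    exact hy (by have : y ∈ C := this ▸ AddSubgroup.mem_top y; exact this)
  have hpos : 0 < Nat.card L := Nat.card_pos
  have hC2 : 2 * Nat.card C ≤ Nat.card L := by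
    obtain ⟨k, hk⟩ := hdvd
    rcases k with _ | _ | k
    · omega
    · omega
    · have : 0 < Nat.card C := Nat.card_pos
      nlinarith
  omega


open scoped Classical in
/-- Every vertex `v` of the non-commuting graph of a finite non-abelian Lie
algebra satisfies `deg v > |V|/2`; hence (by Dirac's theorem) the graph is
Hamiltonian. -/
theorem stmt_8 (K L : Type*) [Field K] [Fintype K] [LieRing L] [LieAlgebra K L]
    [Fintype L] (hna : ∃ a b : L, ⁅a, b⁆ ≠ 0) :
    (∀ v, Nat.card {x : L // ∃ y : L, ⁅x, y⁆ ≠ 0}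
        < 2 * ((ncGraph L).neighborSet v).ncard) ∧
    (ncGraph L).IsHamiltonian := by
  constructor
  · intro v
    exact deg_bound L v
  · have hne : Nonempty {x : L // ∃ y : L, ⁅x, y⁆ ≠ 0} := by
      obtain ⟨a, b, h⟩ := hna
      exact ⟨⟨a, b, h⟩⟩
    apply dirac_ham
    intro v
    have h := deg_bound L v
    rwa [Nat.card_eq_fintype_card] at h
end

section
/- The non-commuting graph of a finite non-abelian Lie algebra is never complete bipartite: its vertex set cannot be partitioned into two nonempty parts with edges exactly between the parts. -/
/-- The non-commuting graph of a finite non-abelian Lie algebra is never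
complete bipartite: its vertex set cannot be partitioned into two nonempty
parts with edges exactly between the parts. -/
theorem stmt_11 (K L : Type*) [Field K] [Fintype K] [LieRing L] [LieAlgebra K L]
    [Fintype L] (hna : ∃ a b : L, ⁅a, b⁆ ≠ 0) :
    ¬ ∃ A B : Set L, A.Nonempty ∧ B.Nonempty ∧ Disjoint A B ∧
        A ∪ B = (lieCenter L)ᶜ ∧
        (∀ a ∈ A, ∀ b ∈ B, ⁅a, b⁆ ≠ 0) ∧
        (∀ a ∈ A, ∀ a' ∈ A, ⁅a, a'⁆ = 0) ∧
        (∀ b ∈ B, ∀ b' ∈ B, ⁅b, b'⁆ = 0) := by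
  rintro ⟨A, B, ⟨a, ha⟩, ⟨b, hb⟩, -, hunion, hAB, hAA, hBB⟩
  have hab : ⁅a, b⁆ ≠ 0 := hAB a ha b hb
  have hba : ⁅b, a⁆ ≠ 0 := fun h => hab (by rw [← lie_skew, h, neg_zero])
  by_cases hc : a + b ∈ lieCenter L
  · have := hc a
    rw [add_lie, lie_self, zero_add] at this
    exact hba this
  · have hmem : a + b ∈ A ∪ B := by rw [hunion]; exact hc
    rcases hmem with h | h
    · have := hAA (a + b) h a ha
      rw [add_lie, lie_self, zero_add] at this
      exact hba this
    · have := hBB (a + b) h b hb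
      rw [add_lie, lie_self, add_zero] at this
      exact hab this
end

section
/- If the non-commuting graph of a finite non-abelian Lie algebra L over F_q has domination number 1 (some vertex adjacent to all other vertices), then |Z(L)| = 1 and q = 2. -/
/-- If the non-commuting graph of a finite non-abelian Lie algebra `L` over `F_q`
has domination number 1 (some vertex adjacent to all other vertices), then
`|Z(L)| = 1` and `q = 2`. -/
theorem stmt_12 (K L : Type*) [Field K] [Fintype K] [LieRing L] [LieAlgebra K L]
    [Fintype L] (hna : ∃ a b : L, ⁅a, b⁆ ≠ 0)
    (hdom : ∃ x ∈ (lieCenter L)ᶜ, ∀ y ∈ (lieCenter L)ᶜ, y ≠ x → ⁅x, y⁆ ≠ 0) :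
    (lieCenter L).ncard = 1 ∧ Fintype.card K = 2 := by
  classical
  obtain ⟨x, hx, hdx⟩ := hdom
  simp only [Set.mem_compl_iff, lieCenter, Set.mem_setOf_eq, not_forall] at hx
  obtain ⟨w, hw⟩ := hx
  have hx0 : x ≠ 0 := by rintro rfl; exact hw (zero_lie w)
  -- Center is {0}
  have hZ : lieCenter L = {0} := by
    ext z
    simp only [Set.mem_singleton_iff, lieCenter, Set.mem_setOf_eq]
    constructor
    · intro hz
      by_contra hz0
      have hxz : x + z ∉ lieCenter L := by
        intro h
        have := h w
        rw [add_lie, hz w, add_zero] at this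
        exact hw this
      have hne : x + z ≠ x := fun h => hz0 (by
        have := h.trans (add_zero x).symm
        exact add_left_cancel this)
      have := hdx (x + z) hxz hne
      apply this
      rw [lie_add, lie_self, zero_add]
      have := hz x
      rw [← lie_skew, this, neg_zero]
    · rintro rfl y; exact zero_lie y
  constructor
  · rw [hZ]; exact Set.ncard_singleton 0
  · -- every element of K is 0 or 1
    have hK : ∀ c : K, c = 0 ∨ c = 1 := by
      intro c
      by_contra h
      push_neg at h
      obtain ⟨hc0, hc1⟩ := h
      have hcx : c • x ∉ lieCenter L := by
        intro h
        have := h w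
        rw [smul_lie] at this
        exact hw ((smul_eq_zero_iff_eq (Units.mk0 c hc0)).mp this)
      have hne : c • x ≠ x := by
        intro h
        have : (c - 1) • x = 0 := by rw [sub_smul, one_smul, h, sub_self]
        rcases smul_eq_zero.mp this with h' | h'
        · exact hc1 (sub_eq_zero.mp h')
        · exact hx0 h'
      have := hdx (c • x) hcx hne
      apply this
      rw [lie_smul, lie_self, smul_zero]
    have h01 : (Finset.univ : Finset K) ⊆ {0, 1} := by
      intro c _
      rcases hK c with h | h <;> simp [h]
    have hle : Fintype.card K ≤ 2 := by
      calc Fintype.card K = Finset.univ.card := rfl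
        _ ≤ ({0, 1} : Finset K).card := Finset.card_le_card h01
        _ ≤ 2 := Finset.card_le_two
    have hge : 2 ≤ Fintype.card K := Fintype.one_lt_card
    omega
end

section
/- The non-commuting graph of a finite non-abelian Lie algebra L has domination number 1 if and only if there exists a non-central element x with |C_L(x)| = 2. -/
/-- The centralizer of an element of a Lie ring, as a set. -/
def lieCentralizer {L : Type*} [LieRing L] (x : L) : Set L := {y : L | ⁅x, y⁆ = 0}

/-- The non-commuting graph of a finite non-abelian Lie algebra `L` has
domination number 1 (some vertex adjacent to all other vertices) if and only if
there is a non-central element `x` with `|C_L(x)| = 2`. -/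
theorem stmt_13 (K L : Type*) [Field K] [Fintype K] [LieRing L] [LieAlgebra K L]
    [Fintype L] (hna : ∃ a b : L, ⁅a, b⁆ ≠ 0) :
    (∃ x ∈ (lieCenter L)ᶜ, ∀ y ∈ (lieCenter L)ᶜ, y ≠ x → ⁅x, y⁆ ≠ 0) ↔
    (∃ x ∈ (lieCenter L)ᶜ, (lieCentralizer x).ncard = 2) := by
  constructor
  · rintro ⟨x, hx, hdom⟩
    refine ⟨x, hx, ?_⟩
    have hx0 : x ≠ 0 := by
      intro h; apply hx; rw [h]; intro y; simp [lieCenter]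
    -- the center is trivial
    have hZ : ∀ z : L, z ∈ lieCenter L → z = 0 := by
      intro z hz
      by_contra hz0
      have hxz : x + z ∈ (lieCenter L)ᶜ := by
        intro hmem
        apply hx
        intro y
        have := hmem y
        rw [add_lie, hz y, add_zero] at this
        exact this
      have hne : x + z ≠ x := by
        intro h; apply hz0; have := add_left_cancel (a := x) (b := z) (c := 0)
        apply this; rw [add_zero]; exact h
      have := hdom (x + z) hxz hne
      apply this
      rw [lie_add, lie_self, zero_add]
      rw [← neg_eq_zero, ← lie_skew, neg_neg]; exact hz x
    have hCx : lieCentralizer x = {0, x} := by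
      ext y
      constructor
      · intro hy
        by_cases hyc : y ∈ lieCenter L
        · left; exact hZ y hyc
        · by_cases hyx : y = x
          · right; exact hyx
          · exact absurd hy (hdom y hyc hyx)
      · rintro (rfl | rfl)
        · simp [lieCentralizer]
        · simp [lieCentralizer]
    rw [hCx]
    rw [Set.ncard_pair (Ne.symm hx0)]
  · rintro ⟨x, hx, hcard⟩
    refine ⟨x, hx, ?_⟩
    intro y hy hyx hlie
    have hx0 : x ≠ 0 := by
      intro h; apply hx; rw [h]; intro z; simp [lieCenter]
    have hsub : {0, x} ⊆ lieCentralizer x := by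
      rintro z (rfl | rfl) <;> simp [lieCentralizer]
    have hfin : (lieCentralizer x).Finite := Set.toFinite _
    have heq : lieCentralizer x = {0, x} := by
      symm
      exact Set.eq_of_subset_of_ncard_le hsub
        (by rw [hcard, Set.ncard_pair (Ne.symm hx0)]) hfin
    have hymem : y ∈ lieCentralizer x := hlie
    rw [heq] at hymem
    rcases hymem with rfl | rfl
    · apply hy; intro z; simp [lieCenter]
    · exact hyx rfl
end

section
/- If L₁ and L₂ are finite non-abelian Lie algebras over F_2 with isomorphic non-commuting graphs, then |L₁| = |L₂| and |Z(L₁)| = |Z(L₂)|. -/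
/-- The center as a submodule over `ZMod 2`. -/
def lieCenterSubmodule (L : Type*) [LieRing L] [LieAlgebra (ZMod 2) L] :
    Submodule (ZMod 2) L where
  carrier := lieCenter L
  add_mem' := by intro a b ha hb y; rw [add_lie, ha y, hb y, add_zero]
  zero_mem' := by intro y; rw [zero_lie]
  smul_mem' := by intro c x hx y; rw [smul_lie, hx y, smul_zero]

lemma two_pow_le_aux {a b a' b' : ℕ} (hb : b < a) (hb' : b' < a')
    (h : 2 ^ a + 2 ^ b' = 2 ^ a' + 2 ^ b) : a ≤ a' := by
  by_contra hc
  push_neg at hc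
  have h1 : 2 ^ a' ≤ 2 ^ (a - 1) := Nat.pow_le_pow_right (by norm_num) (by omega)
  have h2 : 2 ^ b ≤ 2 ^ (a - 1) := Nat.pow_le_pow_right (by norm_num) (by omega)
  have h3 : 2 ^ (a - 1) + 2 ^ (a - 1) = 2 ^ a := by
    rw [← two_mul, ← pow_succ']
    congr 1
    omega
  have h4 : 0 < 2 ^ b' := Nat.pow_pos (by norm_num)
  omega

lemma two_pow_sub_eq {m n m' n' : ℕ} (h1 : m < n) (h2 : m' < n')
    (h : 2 ^ n - 2 ^ m = 2 ^ n' - 2 ^ m') : n = n' ∧ m = m' := by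
  have hm : 2 ^ m ≤ 2 ^ n := Nat.pow_le_pow_right (by norm_num) h1.le
  have hm' : 2 ^ m' ≤ 2 ^ n' := Nat.pow_le_pow_right (by norm_num) h2.le
  have h' : 2 ^ n + 2 ^ m' = 2 ^ n' + 2 ^ m := by omega
  have hn : n = n' :=
    le_antisymm (two_pow_le_aux h1 h2 h') (two_pow_le_aux h2 h1 h'.symm)
  subst hn
  refine ⟨rfl, Nat.pow_right_injective (le_refl 2) ?_⟩
  show 2 ^ m = 2 ^ m'
  omega

lemma card_noncentral (L : Type*) [LieRing L] [LieAlgebra (ZMod 2) L] [Fintype L]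
    (hna : ∃ a b : L, ⁅a, b⁆ ≠ 0) :
    ∃ n m : ℕ, m < n ∧ Nat.card L = 2 ^ n ∧ (lieCenter L).ncard = 2 ^ m ∧
      Nat.card {x : L // ∃ y : L, ⁅x, y⁆ ≠ 0} = 2 ^ n - 2 ^ m := by
  classical
  have hq : Fintype.card (ZMod 2) = 2 := by simp
  refine ⟨Module.finrank (ZMod 2) L, Module.finrank (ZMod 2) (lieCenterSubmodule L), ?_, ?_, ?_, ?_⟩
  · have hlt : lieCenterSubmodule L < ⊤ := by
      obtain ⟨a, b, hab⟩ := hna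
      refine lt_top_iff_ne_top.2 fun htop => hab ?_
      have : a ∈ lieCenterSubmodule L := htop ▸ Submodule.mem_top
      exact this b
    exact Submodule.finrank_lt hlt.ne
  · rw [Nat.card_eq_fintype_card]
    have := Module.card_eq_pow_finrank (K := ZMod 2) (V := L)
    simpa [hq] using this
  · rw [← Nat.card_coe_set_eq]
    have : Nat.card (lieCenter L) = Nat.card (lieCenterSubmodule L) := rfl
    rw [this, Nat.card_eq_fintype_card]
    have := Module.card_eq_pow_finrank (K := ZMod 2) (V := (lieCenterSubmodule L))
    simpa [hq] using this
  · have hset : {x : L | ∃ y : L, ⁅x, y⁆ ≠ 0} = (lieCenter L)ᶜ := by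
      ext x
      simp only [Set.mem_setOf_eq, Set.mem_compl_iff, lieCenter]
      push_neg
      rfl
    have hcompl := Set.ncard_add_ncard_compl (lieCenter L)
    have h1 : Nat.card {x : L // ∃ y : L, ⁅x, y⁆ ≠ 0}
        = ((lieCenter L)ᶜ).ncard := by
      rw [← Nat.card_coe_set_eq, ← hset]
      rfl
    rw [h1]
    rw [Nat.card_eq_fintype_card] at *
    have hc : Fintype.card L = 2 ^ Module.finrank (ZMod 2) L := by
      have := Module.card_eq_pow_finrank (K := ZMod 2) (V := L)
      simpa [hq] using this
    have hz : (lieCenter L).ncard = 2 ^ Module.finrank (ZMod 2) (lieCenterSubmodule L) := by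
      rw [← Nat.card_coe_set_eq]
      have : Nat.card (lieCenter L) = Nat.card (lieCenterSubmodule L) := rfl
      rw [this, Nat.card_eq_fintype_card]
      have := Module.card_eq_pow_finrank (K := ZMod 2) (V := (lieCenterSubmodule L))
      simpa [hq] using this
    omega

/-- If `L₁` and `L₂` are finite non-abelian Lie algebras over `F_2` with
isomorphic non-commuting graphs (a bijection between the sets of non-central
elements preserving adjacency), then `|L₁| = |L₂|` and `|Z(L₁)| = |Z(L₂)|`. -/
theorem stmt_19 (L₁ L₂ : Type*)
    [LieRing L₁] [LieAlgebra (ZMod 2) L₁] [Fintype L₁]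
    [LieRing L₂] [LieAlgebra (ZMod 2) L₂] [Fintype L₂]
    (hna₁ : ∃ a b : L₁, ⁅a, b⁆ ≠ 0) (hna₂ : ∃ a b : L₂, ⁅a, b⁆ ≠ 0)
    (e : {x : L₁ // ∃ y : L₁, ⁅x, y⁆ ≠ 0} ≃ {x : L₂ // ∃ y : L₂, ⁅x, y⁆ ≠ 0})
    (he : ∀ a b : {x : L₁ // ∃ y : L₁, ⁅x, y⁆ ≠ 0},
      ⁅(a : L₁), (b : L₁)⁆ ≠ 0 ↔ ⁅(e a : L₂), (e b : L₂)⁆ ≠ 0) :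
    Nat.card L₁ = Nat.card L₂ ∧ (lieCenter L₁).ncard = (lieCenter L₂).ncard := by
  obtain ⟨n₁, m₁, hlt₁, hc₁, hz₁, hn₁⟩ := card_noncentral L₁ hna₁
  obtain ⟨n₂, m₂, hlt₂, hc₂, hz₂, hn₂⟩ := card_noncentral L₂ hna₂
  have hcard : Nat.card {x : L₁ // ∃ y : L₁, ⁅x, y⁆ ≠ 0}
      = Nat.card {x : L₂ // ∃ y : L₂, ⁅x, y⁆ ≠ 0} := Nat.card_congr e
  rw [hn₁, hn₂] at hcard
  obtain ⟨hn, hm⟩ := two_pow_sub_eq hlt₁ hlt₂ hcard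
  rw [hc₁, hc₂, hz₁, hz₂, hn, hm]
  exact ⟨rfl, rfl⟩
end
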